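/- Let $K$ be a field of characteristic $0$, $g_2, g_3 \in K$, and let $T : K[X,Y] \to K[X,Y]$ be the reduction map modulo the relation $X^3 = \frac{1}{4}(Y^2 + g_2 X + g_3)$, producing the unique polynomial of degree $\leq 2$ in $X$ equivalent to the input modulo $Y^2 - 4X^3 + g_2 X + g_3$. Then for every $n \geq 0$, $T(X^n)$ has total degree at most $n - \lfloor n/3 \rfloor$, degree in $Y$ at most $2\lfloor n/3 \rfloor$, and its canonical expansion contains the monomial $(1/4)^{\lfloor n/3 \rfloor} X^{n - 3\lfloor n/3 \rfloor} Y^{2\lfloor n/3 \rfloor}$ with nonzero coefficient. -/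

import Mathlib

open MvPolynomial

noncomputable def redP {K : Type*} [Field K] (g₂ g₃ : K) : ℕ → MvPolynomial (Fin 2) K
  | 0 => 1
  | 1 => X 0
  | 2 => (X 0) ^ 2
  | (n + 3) => C (1/4 : K) *
      ((X 1) ^ 2 * redP g₂ g₃ n + C g₂ * redP g₂ g₃ (n + 1) + C g₃ * redP g₂ g₃ n)


lemma coeff_eq_zero_of_degreeOf_lt' {σ R : Type*} [CommSemiring R] {p : MvPolynomial σ R}
    {d : σ →₀ ℕ} {i : σ} (h : MvPolynomial.degreeOf i p < d i) : MvPolynomial.coeff d p = 0 := by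
  by_contra hne
  have hd : d ∈ p.support := MvPolynomial.mem_support_iff.2 hne
  have : d i ≤ MvPolynomial.degreeOf i p := by
    rw [MvPolynomial.degreeOf_eq_sup]
    exact Finset.le_sup (f := fun m => m i) hd
  omega

section aux
variable {K : Type*} [Field K] [CharZero K] (g₂ g₃ : K)

local notation "fpoly" => ((X 1 : MvPolynomial (Fin 2) K) ^ 2 - 4 * X 0 ^ 3 +
  C g₂ * X 0 + C g₃)

lemma redP_spec (n : ℕ) :
    degreeOf 0 (redP g₂ g₃ n) ≤ 2 ∧
    (fpoly ∣ (X 0 : MvPolynomial (Fin 2) K) ^ n - redP g₂ g₃ n) ∧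
    (redP g₂ g₃ n).totalDegree ≤ n - n / 3 ∧
    degreeOf 1 (redP g₂ g₃ n) ≤ 2 * (n / 3) ∧
    coeff (Finsupp.single (0 : Fin 2) (n - 3 * (n / 3)) +
      Finsupp.single (1 : Fin 2) (2 * (n / 3))) (redP g₂ g₃ n) = (1 / 4 : K) ^ (n / 3) := by
  induction n using Nat.strong_induction_on with
  | _ n ih =>
    match n with
    | 0 =>
      have h1 : ∀ i : Fin 2, degreeOf i (1 : MvPolynomial (Fin 2) K) = 0 := by
        intro i; classical rw [degreeOf_def, degrees_one]; simp
      refine ⟨by simp [redP, h1], ⟨0, by simp [redP]⟩, by simp [redP], by simp [redP, h1], ?_⟩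
      simp [redP, Finsupp.single_zero]
    | 1 =>
      refine ⟨?_, ⟨0, by simp [redP]⟩, ?_, ?_, ?_⟩
      · simp [redP, degreeOf_X]
      · simp [redP, totalDegree_X]
      · simp [redP, degreeOf_X]
      · simp [redP, Finsupp.single_zero, coeff_X']
    | 2 =>
      refine ⟨?_, ⟨0, by simp [redP]⟩, ?_, ?_, ?_⟩
      · simp [redP]
      · simp [redP, totalDegree_X_pow]
      · exact le_trans (by simpa [redP] using degreeOf_pow_le (1 : Fin 2) (X 0 : MvPolynomial (Fin 2) K) 2) (by simp [degreeOf_X])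
      · simp [redP, Finsupp.single_zero, X_pow_eq_monomial, coeff_monomial]
    | (m + 3) =>
      obtain ⟨h0, ⟨q1, hq1⟩, ht, hy, hc⟩ := ih m (by omega)
      obtain ⟨h0', ⟨q2, hq2⟩, ht', hy', hc'⟩ := ih (m+1) (by omega)
      have hX10 : degreeOf (0 : Fin 2) ((X 1 : MvPolynomial (Fin 2) K) ^ 2) ≤ 0 :=
        (degreeOf_pow_le _ _ _).trans (by simp [degreeOf_X])
      have hX11 : degreeOf (1 : Fin 2) ((X 1 : MvPolynomial (Fin 2) K) ^ 2) ≤ 2 :=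
        (degreeOf_pow_le _ _ _).trans (by simp [degreeOf_X])
      refine ⟨?_, ?_, ?_, ?_, ?_⟩
      · -- degreeOf 0 ≤ 2
        simp only [redP]
        refine (degreeOf_C_mul_le _ _ _).trans ?_
        refine (degreeOf_add_le _ _ _).trans (max_le ((degreeOf_add_le _ _ _).trans
          (max_le ?_ ?_)) ?_)
        · exact (degreeOf_mul_le _ _ _).trans (by omega)
        · refine (degreeOf_mul_le _ _ _).trans ?_
          simp only [degreeOf_C]; omega
        · refine (degreeOf_mul_le _ _ _).trans ?_
          simp only [degreeOf_C]; omega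
      · -- divisibility
        refine ⟨C (1/4 : K) * ((X 1) ^ 2 * q1 + C g₂ * q2 + C g₃ * q1 - X 0 ^ m), ?_⟩
        have h4 : (C (1/4 : K) : MvPolynomial (Fin 2) K) * 4 = 1 := by
          rw [show (4 : MvPolynomial (Fin 2) K) = C 4 from (map_ofNat _ 4).symm, ← C_mul]
          norm_num
        simp only [redP]
        linear_combination (C (1/4 : K) * ((X 1 : MvPolynomial (Fin 2) K) ^ 2 + C g₃)) * hq1 +
          (C (1/4 : K) * C g₂) * hq2 - (X 0 : MvPolynomial (Fin 2) K) ^ (m + 3) * h4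
      · -- totalDegree
        simp only [redP]
        refine (totalDegree_mul _ _).trans ?_
        rw [totalDegree_C, zero_add]
        refine (totalDegree_add _ _).trans (max_le ((totalDegree_add _ _).trans
          (max_le ?_ ?_)) ?_)
        · refine (totalDegree_mul _ _).trans ?_
          have : ((X 1 : MvPolynomial (Fin 2) K) ^ 2).totalDegree = 2 := totalDegree_X_pow _ _
          omega
        · refine (totalDegree_mul _ _).trans ?_
          rw [totalDegree_C, zero_add]; omega
        · refine (totalDegree_mul _ _).trans ?_
          rw [totalDegree_C, zero_add]; omega
      · -- degreeOf 1
        simp only [redP]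
        refine (degreeOf_C_mul_le _ _ _).trans ?_
        refine (degreeOf_add_le _ _ _).trans (max_le ((degreeOf_add_le _ _ _).trans
          (max_le ?_ ?_)) ?_)
        · exact (degreeOf_mul_le _ _ _).trans (by omega)
        · refine (degreeOf_mul_le _ _ _).trans ?_
          simp only [degreeOf_C]; omega
        · refine (degreeOf_mul_le _ _ _).trans ?_
          simp only [degreeOf_C]; omega
      · -- coefficient
        have e1 : (m + 3) / 3 = m / 3 + 1 := by omega
        have e2 : (m + 3) - 3 * ((m + 3) / 3) = m - 3 * (m / 3) := by omega
        set M : Fin 2 →₀ ℕ := Finsupp.single (0 : Fin 2) ((m+3) - 3 * ((m+3) / 3)) +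
          Finsupp.single (1 : Fin 2) (2 * ((m+3) / 3)) with hMdef
        have hM : M = Finsupp.single (1 : Fin 2) 2 +
            (Finsupp.single (0 : Fin 2) (m - 3 * (m / 3)) +
             Finsupp.single (1 : Fin 2) (2 * (m / 3))) := by
          ext i; fin_cases i <;> simp [hMdef, Finsupp.single_apply] <;> omega
        have hM1 : M 1 = 2 * (m / 3) + 2 := by
          simp [hMdef, Finsupp.single_apply]; omega
        have hB : coeff M (redP g₂ g₃ (m+1)) = 0 := by
          rcases Nat.lt_or_ge (m % 3) 2 with hr | hr
          · exact coeff_eq_zero_of_degreeOf_lt' (by rw [hM1]; omega)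
          · refine coeff_eq_zero_of_totalDegree_lt ?_
            have hsum : ∑ i ∈ M.support, M i = M 0 + M 1 := by
              rw [Finset.sum_subset (Finset.subset_univ M.support)
                (fun x _ hx => Finsupp.notMem_support_iff.mp hx)]
              simp [Fin.sum_univ_two]
            have hM0 : M 0 = m - 3 * (m / 3) := by
              simp [hMdef, Finsupp.single_apply]; omega
            rw [hsum, hM0, hM1]; omega
        have hD : coeff M (redP g₂ g₃ m) = 0 :=
          coeff_eq_zero_of_degreeOf_lt' (by rw [hM1]; omega)
        simp only [redP, ← hMdef]
        rw [coeff_C_mul, coeff_add, coeff_add, coeff_C_mul, coeff_C_mul, hB, hD,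
          X_pow_eq_monomial, hM, coeff_monomial_mul, hc, e1, pow_succ]
        ring
end aux

theorem stmt_15 (K : Type*) [Field K] [CharZero K] (g₂ g₃ : K) (n : ℕ)
    (P : MvPolynomial (Fin 2) K)
    (hdeg : MvPolynomial.degreeOf 0 P ≤ 2)
    (hmem : (MvPolynomial.X 0 : MvPolynomial (Fin 2) K) ^ n - P ∈
      Ideal.span {(MvPolynomial.X 1 : MvPolynomial (Fin 2) K) ^ 2 -
        4 * MvPolynomial.X 0 ^ 3 + MvPolynomial.C g₂ * MvPolynomial.X 0 +
        MvPolynomial.C g₃}) :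
    P.totalDegree ≤ n - n / 3 ∧
    MvPolynomial.degreeOf 1 P ≤ 2 * (n / 3) ∧
    MvPolynomial.coeff
      (Finsupp.single (0 : Fin 2) (n - 3 * (n / 3)) +
        Finsupp.single (1 : Fin 2) (2 * (n / 3))) P = (1 / 4 : K) ^ (n / 3) := by
  classical
  obtain ⟨h0, ⟨q1, hq1⟩, ht, hy, hc⟩ := redP_spec g₂ g₃ n
  rw [Ideal.mem_span_singleton] at hmem
  obtain ⟨q, hq⟩ := hmem
  set f : MvPolynomial (Fin 2) K :=
    X 1 ^ 2 - 4 * X 0 ^ 3 + C g₂ * X 0 + C g₃ with hf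
  have hD : P - redP g₂ g₃ n = f * (q1 - q) := by
    rw [mul_sub, ← hq1, ← hq]; ring
  have hdD : degreeOf 0 (P - redP g₂ g₃ n) ≤ 2 :=
    (degreeOf_sub_le _ _ _).trans (max_le hdeg h0)
  have hφf : (finSuccEquiv K 1) f =
      Polynomial.C ((X 0 : MvPolynomial (Fin 1) K) ^ 2) - 4 * Polynomial.X ^ 3 +
        Polynomial.C (C g₂) * Polynomial.X + Polynomial.C (C g₃) := by
    rw [hf, show (X 1 : MvPolynomial (Fin 2) K) = X (Fin.succ 0) from rfl]
    simp only [map_sub, map_add, map_mul, map_pow, map_ofNat, finSuccEquiv_X_zero,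
      finSuccEquiv_X_succ]
    simp [finSuccEquiv_apply]
  have hf3 : ((finSuccEquiv K 1) f).natDegree = 3 := by
    rw [hφf]; compute_degree!
  have hq0 : q1 - q = 0 := by
    by_contra hne
    have hfne : (finSuccEquiv K 1) f ≠ 0 := fun h => by simp [h] at hf3
    have hqne : (finSuccEquiv K 1) (q1 - q) ≠ 0 := fun h =>
      hne ((finSuccEquiv K 1).injective (by simpa using h))
    have hdd : degreeOf 0 (P - redP g₂ g₃ n) =
        ((finSuccEquiv K 1) f).natDegree + ((finSuccEquiv K 1) (q1 - q)).natDegree := by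
      rw [← natDegree_finSuccEquiv, hD, map_mul, Polynomial.natDegree_mul hfne hqne]
    omega
  have hPeq : P = redP g₂ g₃ n := by
    have := hD
    rw [hq0, mul_zero, sub_eq_zero] at this
    exact this
  rw [hPeq]
  exact ⟨ht, hy, hc⟩
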